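/- Every finite perfect group is normally generated by a single element; that is, if G is a finite group with G = [G,G], then there exists g ∈ G such that the smallest normal subgroup of G containing g is all of G. -/

import Mathlib

open Subgroup
open scoped commutatorElement

/-- A nontrivial finite group has a minimal nontrivial normal subgroup. -/
lemma exists_minimal_normal (G : Type*) [Group G] [Finite G] [Nontrivial G] :
    ∃ N : Subgroup G, N.Normal ∧ N ≠ ⊥ ∧
      ∀ M : Subgroup G, M.Normal → M ≠ ⊥ → M ≤ N → M = N := by
  set S : Set ℕ := {k | ∃ N : Subgroup G, N.Normal ∧ N ≠ ⊥ ∧ Nat.card N = k} with hS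
  have htopbot : (⊤ : Subgroup G) ≠ ⊥ := by
    obtain ⟨x, y, hxy⟩ := exists_pair_ne G
    intro h
    have hx : x ∈ (⊥ : Subgroup G) := h ▸ Subgroup.mem_top x
    have hy : y ∈ (⊥ : Subgroup G) := h ▸ Subgroup.mem_top y
    rw [Subgroup.mem_bot] at hx hy
    exact hxy (hx.trans hy.symm)
  have hne : S.Nonempty := ⟨Nat.card (⊤ : Subgroup G), ⊤, inferInstance, htopbot, rfl⟩
  obtain ⟨N, hN, hNbot, hNcard⟩ := Nat.sInf_mem hne
  refine ⟨N, hN, hNbot, fun M hM hMbot hle => ?_⟩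
  have hMS : Nat.card M ∈ S := ⟨M, hM, hMbot, rfl⟩
  have : sInf S ≤ Nat.card M := Nat.sInf_le hMS
  exact Subgroup.eq_of_le_of_card_ge hle (hNcard ▸ this)

lemma aux_perfect_ngen : ∀ (n : ℕ) (G : Type u) [Group G] [Finite G],
    Nat.card G = n → commutator G = ⊤ → ∃ g : G, Subgroup.normalClosure {g} = ⊤ := by
  intro n
  induction n using Nat.strong_induction_on with
  | _ n ih =>
    intro G _ _ hcard hperf
    rcases subsingleton_or_nontrivial G with hs | hnt
    · refine ⟨1, ?_⟩
      ext x
      simp only [Subgroup.mem_top, iff_true]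
      rw [Subsingleton.elim x 1]
      exact Subgroup.one_mem _
    · -- pick a minimal nontrivial normal subgroup N
      obtain ⟨N, hNnorm, hNbot, hNmin⟩ := exists_minimal_normal G
      -- the quotient is smaller and perfect
      set Q := G ⧸ N with hQ
      have : hNnorm = hNnorm := rfl
      haveI : N.Normal := hNnorm
      have hcardlt : Nat.card Q < n := by
        have h1 : Nat.card G = Nat.card Q * Nat.card N :=
          Subgroup.card_eq_card_quotient_mul_card_subgroup N
        have h2 : 1 < Nat.card N := (Subgroup.one_lt_card_iff_ne_bot N).2 hNbot
        have h3 : 0 < Nat.card Q := Nat.card_pos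
        have h4 : Nat.card Q < Nat.card Q * Nat.card N := (Nat.lt_mul_iff_one_lt_right h3).2 h2
        omega
      have hsurj : Function.Surjective (QuotientGroup.mk' N) :=
        QuotientGroup.mk'_surjective N
      have hQperf : commutator Q = ⊤ := by
        rw [_root_.commutator_def, ← Subgroup.map_top_of_surjective _ hsurj,
          ← Subgroup.map_commutator, ← _root_.commutator_def, hperf,
          Subgroup.map_top_of_surjective _ hsurj]
      obtain ⟨q, hq⟩ := ih _ hcardlt Q rfl hQperf
      obtain ⟨g, hg⟩ := hsurj q
      set H := Subgroup.normalClosure ({g} : Set G) with hH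
      haveI hHnorm : H.Normal := Subgroup.normalClosure_normal
      have hmapH : H.map (QuotientGroup.mk' N) = ⊤ := by
        rw [hH, Subgroup.map_normalClosure _ _ hsurj, Set.image_singleton, hg, hq]
      have hsup : H ⊔ N = ⊤ := by
        have := Subgroup.comap_map_eq (QuotientGroup.mk' N) H
        rw [hmapH, QuotientGroup.ker_mk'] at this
        rw [← this, Subgroup.comap_top]
      by_cases hHtop : H = ⊤
      · exact ⟨g, hHtop⟩
      -- otherwise H ⊓ N = ⊥ by minimality of N
      have hHN : H ⊓ N = ⊥ := by
        by_contra hne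
        have : H ⊓ N = N := hNmin _ (Subgroup.normal_inf_normal H N) hne inf_le_right
        have hNH : N ≤ H := this ▸ inf_le_left
        exact hHtop (by rw [← hsup, sup_eq_left.2 hNH])
      have hcomm : ∀ x ∈ H, ∀ y ∈ N, Commute x y := fun x hx y hy =>
        Subgroup.commute_of_normal_of_disjoint H N hHnorm hNnorm
          (disjoint_iff.2 hHN) x y hx hy
      -- N is nonabelian: find noncommuting elements
      have hgH : g ∈ H := Subgroup.subset_normalClosure (Set.mem_singleton g)
      have hnab : ∃ m ∈ N, ∃ y ∈ N, ⁅m, y⁆ ≠ 1 := by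
        by_contra hab
        push_neg at hab
        -- then G/H is abelian and perfect, so trivial, so H = ⊤
        apply hHtop
        have hsurjH : ∀ p : G ⧸ H, ∃ m ∈ N, QuotientGroup.mk' H m = p := by
          intro p
          obtain ⟨x, hx⟩ := QuotientGroup.mk'_surjective H p
          have hxmem : x ∈ H ⊔ N := hsup ▸ Subgroup.mem_top x
          rw [← SetLike.mem_coe, Subgroup.mul_normal H N] at hxmem
          obtain ⟨h, hh, m, hm, hhm⟩ := hxmem
          refine ⟨m, hm, ?_⟩
          have hx2 : h * m = x := hhm
          have hone : (QuotientGroup.mk' H) h = 1 := (QuotientGroup.eq_one_iff h).2 hh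
          rw [← hx, ← hx2, map_mul, hone, one_mul]
        have habq : commutator (G ⧸ H) = ⊥ := by
          rw [_root_.commutator_def]
          refine eq_bot_iff.2 (Subgroup.commutator_le.2 fun a _ b _ => ?_)
          obtain ⟨m1, hm1, hq1⟩ := hsurjH a
          obtain ⟨m2, hm2, hq2⟩ := hsurjH b
          rw [← hq1, ← hq2, ← map_commutatorElement, hab m1 hm1 m2 hm2, map_one]
          exact Subgroup.one_mem ⊥
        have hQHperf : commutator (G ⧸ H) = ⊤ := by
          have hsurjH' := QuotientGroup.mk'_surjective H
          rw [_root_.commutator_def, ← Subgroup.map_top_of_surjective _ hsurjH',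
            ← Subgroup.map_commutator, ← _root_.commutator_def, hperf,
            Subgroup.map_top_of_surjective _ hsurjH']
        have hbt : (⊥ : Subgroup (G ⧸ H)) = ⊤ := habq ▸ hQHperf
        refine top_le_iff.1 fun x _ => ?_
        have : (QuotientGroup.mk' H) x ∈ (⊤ : Subgroup (G ⧸ H)) := Subgroup.mem_top _
        rw [← hbt, Subgroup.mem_bot] at this
        exact (QuotientGroup.eq_one_iff x).1 this
      obtain ⟨m, hm, y, hy, hmy⟩ := hnab
      -- the element g * m normally generates G
      refine ⟨g * m, ?_⟩
      set K := Subgroup.normalClosure ({g * m} : Set G) with hK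
      haveI hKnorm : K.Normal := Subgroup.normalClosure_normal
      have hgmK : g * m ∈ K := Subgroup.subset_normalClosure (Set.mem_singleton _)
      -- ⁅g*m, y⁆ ∈ K
      have hcommK : ⁅g * m, y⁆ ∈ K := by
        rw [commutatorElement_def]
        have h1 : y * (g * m)⁻¹ * y⁻¹ ∈ K := hKnorm.conj_mem _ (Subgroup.inv_mem K hgmK) y
        have := Subgroup.mul_mem K hgmK h1
        convert this using 1
        group
      -- ⁅g*m, y⁆ = ⁅m, y⁆
      have hcalc : ⁅g * m, y⁆ = ⁅m, y⁆ := by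
        have hgy : Commute g y := hcomm g hgH y hy
        have hgm : Commute g m := hcomm g hgH m hm
        have h1 : Commute g (m * y * m⁻¹) := (hgm.mul_right hgy).mul_right hgm.inv_right
        calc ⁅g * m, y⁆
            = g * (m * y * m⁻¹) * g⁻¹ * y⁻¹ := by
              simp only [commutatorElement_def, mul_inv_rev]; group
          _ = m * y * m⁻¹ * g * g⁻¹ * y⁻¹ := by rw [h1.eq]
          _ = ⁅m, y⁆ := by rw [commutatorElement_def]; group
      have hmyK : ⁅m, y⁆ ∈ K := hcalc ▸ hcommK
      -- K ⊓ N is a nontrivial normal subgroup contained in N, so it equals N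
      have hKN : K ⊓ N = N := by
        refine hNmin _ (Subgroup.normal_inf_normal K N) ?_ inf_le_right
        intro hbot
        have hmyN : ⁅m, y⁆ ∈ N := by
          rw [commutatorElement_def]
          exact Subgroup.mul_mem N (Subgroup.mul_mem N (Subgroup.mul_mem N hm hy)
            (Subgroup.inv_mem N hm)) (Subgroup.inv_mem N hy)
        have : ⁅m, y⁆ ∈ K ⊓ N := ⟨hmyK, hmyN⟩
        rw [hbot, Subgroup.mem_bot] at this
        exact hmy this
      have hNK : N ≤ K := hKN ▸ inf_le_left
      have hgK : g ∈ K := by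
        have : (g * m) * m⁻¹ ∈ K := Subgroup.mul_mem K hgmK (Subgroup.inv_mem K (hNK hm))
        simpa using this
      have hHK : H ≤ K := Subgroup.normalClosure_le_normal (by simpa using hgK)
      rw [← top_le_iff, ← hsup]
      exact sup_le hHK hNK

/-- Every finite perfect group is normally generated by a single element. -/
theorem finite_perfect_normally_generated_by_one
    (G : Type*) [Group G] [Finite G] (hperf : commutator G = ⊤) :
    ∃ g : G, Subgroup.normalClosure {g} = ⊤ := by
  exact aux_perfect_ngen (Nat.card G) G rfl hperf
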